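/- Let 𝒫 be a partitioning of Ω, i.e., a finite family of nonempty pairwise disjoint subsets (segments) covering Ω such that any two pixels of a segment can be joined by a path lying in that segment whose consecutive points differ by one of the directions a_1,…,a_S. Let 𝒜^𝒫 be the linear space of S-tuples (f_1,…,f_S) of functions Ω → ℝ such that, for each s, f_s is constant on every maximal a_s-directed discrete interval contained in a single segment of 𝒫, and let ℬ^𝒫 = {f ∈ 𝒜^𝒫 : f_1 = … = f_S}. Then the map ι(g) = (g,…,g) is a linear bijection from the space of functions g : Ω → ℝ that are constant on every segment of 𝒫 onto ℬ^𝒫. -/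

import Mathlib

open Finset

/-- The discrete image domain `Ω = {0,…,M−1} × {0,…,N−1} ⊆ ℤ²`. -/
noncomputable def gridDomain (M N : ℕ) : Finset (ℤ × ℤ) :=
  (Finset.Ico (0 : ℤ) (M : ℤ)) ×ˢ (Finset.Ico (0 : ℤ) (N : ℤ))

/-- Pixels of the image domain. -/
abbrev Pix (M N : ℕ) := {p : ℤ × ℤ // p ∈ gridDomain M N}

/-- One step of a path inside `P`: both endpoints lie in `P` and they differ by one of
the directions `a_1,…,a_S`. -/
def PathStep {S : ℕ} (a : Fin S → ℤ × ℤ) (P : Finset (ℤ × ℤ)) (x y : ℤ × ℤ) : Prop :=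
  x ∈ P ∧ y ∈ P ∧ ∃ s, y = x + a s ∨ x = y + a s

/-- A partitioning of `Ω`: a finite family of nonempty pairwise disjoint segments
covering `Ω`, each of which is connected via paths with steps in the directions
`a_1,…,a_S`. -/
structure Partitioning (M N S : ℕ) (a : Fin S → ℤ × ℤ) where
  segs : Finset (Finset (ℤ × ℤ))
  seg_nonempty : ∀ P ∈ segs, P.Nonempty
  seg_disjoint : ∀ P ∈ segs, ∀ Q ∈ segs, P ≠ Q → Disjoint P Q
  seg_cover : ∀ p : ℤ × ℤ, p ∈ gridDomain M N ↔ ∃ P ∈ segs, p ∈ P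
  seg_connected : ∀ P ∈ segs, ∀ x ∈ P, ∀ y ∈ P,
    Relation.ReflTransGen (PathStep a P) x y

/-- The space `𝒜^Pt`: tuples `(f_1,…,f_S)` such that each `f_s` is constant on every
`a_s`-directed discrete interval contained in a single segment of `Pt` (equivalently,
`f_s` takes the same value on any two pixels of a common segment differing by `a_s`). -/
def Aspace (M N S : ℕ) (a : Fin S → ℤ × ℤ) (Pt : Partitioning M N S a) :
    Set (Fin S → Pix M N → ℝ) :=
  {f | ∀ s : Fin S, ∀ P ∈ Pt.segs, ∀ p q : Pix M N,
    (p : ℤ × ℤ) ∈ P → (q : ℤ × ℤ) ∈ P → (q : ℤ × ℤ) = (p : ℤ × ℤ) + a s →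
      f s q = f s p}

/-- The space `ℬ^Pt = {f ∈ 𝒜^Pt : f_1 = … = f_S}`. -/
def Bspace (M N S : ℕ) (a : Fin S → ℤ × ℤ) (Pt : Partitioning M N S a) :
    Set (Fin S → Pix M N → ℝ) :=
  {f ∈ Aspace M N S a Pt | ∀ s s' : Fin S, f s = f s'}

/-- Functions `Ω → ℝ` that are constant on every segment of `Pt`. -/
def ConstOnSegs (M N S : ℕ) (a : Fin S → ℤ × ℤ) (Pt : Partitioning M N S a) :
    Set (Pix M N → ℝ) :=
  {g | ∀ P ∈ Pt.segs, ∀ p q : Pix M N,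
    (p : ℤ × ℤ) ∈ P → (q : ℤ × ℤ) ∈ P → g p = g q}

/-- the map `ι(g) = (g,…,g)` is a linear bijection from the space of
functions constant on every segment of `Pt` onto `ℬ^Pt`. -/
theorem iota_linear_bijection (M N S : ℕ) (hM : 1 ≤ M) (hN : 1 ≤ N) (hS : 1 ≤ S)
    (a : Fin S → ℤ × ℤ) (ha : ∀ s, a s ≠ 0) (Pt : Partitioning M N S a) :
    Set.BijOn (fun (g : Pix M N → ℝ) => (fun _ : Fin S => g))
        (ConstOnSegs M N S a Pt) (Bspace M N S a Pt) ∧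
      (∀ g₁ g₂ : Pix M N → ℝ,
        (fun _ : Fin S => g₁ + g₂) = (fun _ : Fin S => g₁) + (fun _ : Fin S => g₂)) ∧
      (∀ (c : ℝ) (g : Pix M N → ℝ),
        (fun _ : Fin S => c • g) = c • (fun _ : Fin S => g)) := by
  have s0 : Fin S := ⟨0, hS⟩
  refine ⟨⟨?_, ?_, ?_⟩, fun g₁ g₂ => rfl, fun c g => rfl⟩
  · -- MapsTo
    intro g hg
    refine ⟨?_, fun s s' => rfl⟩
    intro s P hP p q hp hq _
    exact hg P hP q p hq hp
  · -- InjOn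
    intro g₁ _ g₂ _ h
    exact congrFun h s0
  · -- SurjOn
    rintro f ⟨hfA, hfE⟩
    refine ⟨f s0, ?_, ?_⟩
    · intro P hP p q hp hq
      -- use connectivity
      have hconn := Pt.seg_connected P hP p.1 hp q.1 hq
      have key : ∀ y, Relation.ReflTransGen (PathStep a P) p.1 y →
          ∀ hy : y ∈ gridDomain M N, f s0 ⟨y, hy⟩ = f s0 p := by
        intro y hpath
        induction hpath with
        | refl => intro hy; congr
        | tail _ hstep ih =>
          rename_i b c _
          intro hc
          obtain ⟨hbP, hcP, s, hcase⟩ := hstep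
          have hb : b ∈ gridDomain M N := (Pt.seg_cover b).2 ⟨P, hP, hbP⟩
          have hbc : f s0 ⟨c, hc⟩ = f s0 ⟨b, hb⟩ := by
            rcases hcase with h1 | h1
            · have := hfA s P hP ⟨b, hb⟩ ⟨c, hc⟩ hbP hcP h1
              calc f s0 ⟨c, hc⟩ = f s ⟨c, hc⟩ := congrFun (hfE s0 s) _
                _ = f s ⟨b, hb⟩ := this
                _ = f s0 ⟨b, hb⟩ := congrFun (hfE s s0) _
            · have := hfA s P hP ⟨c, hc⟩ ⟨b, hb⟩ hcP hbP h1
              calc f s0 ⟨c, hc⟩ = f s ⟨c, hc⟩ := congrFun (hfE s0 s) _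
                _ = f s ⟨b, hb⟩ := this.symm
                _ = f s0 ⟨b, hb⟩ := congrFun (hfE s s0) _
          rw [hbc, ih hb]
      exact (key q.1 hconn q.2).symm
    · funext s
      exact hfE s0 s
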